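/- (Key cancellation in Proposition 5: time evolution of the defect contribution to the conserved quantities.) Let T₁, T₂ : ℝ → M₂(ℂ) with entries T_j^{kl}(t), and assume T₁^{22}(t) = −T₁^{11}(t) for all t. Let 𝒟 : ℝ → M₂(ℂ) be differentiable with 𝒟′(t) = T₂(t) 𝒟(t) − 𝒟(t) T₁(t). Let Ω¹ : ℝ → ℂ be differentiable and satisfy the Riccati equation (Ω¹)′(t) = T₁^{21}(t) − 2 T₁^{11}(t) Ω¹(t) − T₁^{12}(t) (Ω¹(t))². Set h(t) = 𝒟^{11}(t) + 𝒟^{12}(t) Ω¹(t), assume h(t) ≠ 0 for all t, and define Ω²(t) = (𝒟^{21}(t) + 𝒟^{22}(t) Ω¹(t)) / h(t). Then for all t ∈ ℝ: h′(t) = ( T₂^{11}(t) + T₂^{12}(t) Ω²(t) − T₁^{11}(t) − T₁^{12}(t) Ω¹(t) ) · h(t). -/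

import Mathlib

noncomputable section

open Matrix

/-- Key cancellation in Proposition 5: if `𝒟′ = T₂ 𝒟 − 𝒟 T₁`, `Ω¹` solves the Riccati
equation `(Ω¹)′ = T₁²¹ − 2 T₁¹¹ Ω¹ − T₁¹² (Ω¹)²`, `T₁²² = −T₁¹¹`, and
`h = 𝒟¹¹ + 𝒟¹² Ω¹` is nowhere zero, then with
`Ω² = (𝒟²¹ + 𝒟²² Ω¹)/h` one has `h′ = (T₂¹¹ + T₂¹² Ω² − T₁¹¹ − T₁¹² Ω¹) h`. -/
theorem stmt19 (T₁ T₂ : ℝ → Matrix (Fin 2) (Fin 2) ℂ)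
    (htrace : ∀ t : ℝ, T₁ t 1 1 = -(T₁ t 0 0))
    (𝒟 : ℝ → Matrix (Fin 2) (Fin 2) ℂ)
    (h𝒟 : ∀ (t : ℝ) (i j : Fin 2),
      HasDerivAt (fun s => 𝒟 s i j) ((T₂ t * 𝒟 t - 𝒟 t * T₁ t) i j) t)
    (Ω₁ : ℝ → ℂ)
    (hΩ₁ : ∀ t : ℝ,
      HasDerivAt Ω₁ (T₁ t 1 0 - 2 * T₁ t 0 0 * Ω₁ t - T₁ t 0 1 * (Ω₁ t) ^ 2) t)
    (h : ℝ → ℂ)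
    (hdef : ∀ t : ℝ, h t = 𝒟 t 0 0 + 𝒟 t 0 1 * Ω₁ t)
    (hne : ∀ t : ℝ, h t ≠ 0)
    (Ω₂ : ℝ → ℂ)
    (hΩ₂ : ∀ t : ℝ, Ω₂ t = (𝒟 t 1 0 + 𝒟 t 1 1 * Ω₁ t) / h t) :
    ∀ t : ℝ,
      HasDerivAt h
        ((T₂ t 0 0 + T₂ t 0 1 * Ω₂ t - T₁ t 0 0 - T₁ t 0 1 * Ω₁ t) * h t) t := by
  intro t
  have hfun : h = fun s => 𝒟 s 0 0 + 𝒟 s 0 1 * Ω₁ s := funext hdef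
  have H := (h𝒟 t 0 0).add ((h𝒟 t 0 1).mul (hΩ₁ t))
  rw [hfun]
  convert H using 1
  case e'_4 => exact rfl
  case e'_8 => rfl
  have hΩ₂' : Ω₂ t * h t = 𝒟 t 1 0 + 𝒟 t 1 1 * Ω₁ t := by
    rw [hΩ₂]; field_simp [hne t]
  have hht := hdef t
  simp only [Matrix.sub_apply, Matrix.mul_apply, Fin.sum_univ_two, htrace t] at *
  have := hne t
  rw [hdef t] at hΩ₂'
  linear_combination (T₂ t 0 1) * hΩ₂'

end
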